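/- Let q be a prime, m ≥ 1, and w : ZMod q → ℕ a map satisfying w(α) = 0 if and only if α = 0 and {w(α) : α ∈ ZMod q, α ≠ 0} = {1, 2, …, m}. For every k ≥ 1 and every n with k ≤ n ≤ Σ_{i=0}^{k−1} (m+1)^i, there exists a k-dimensional ZMod q-subspace C of (Fin n → ZMod q) whose weight set W(C) equals {1, 2, …, n·m}. -/

import Mathlib

/-- The weight of a vector with respect to a coordinate-wise weight function. -/
def wtVec {q n : ℕ} (w : ZMod q → ℕ) (c : Fin n → ZMod q) : ℕ := ∑ i, w (c i)

/-- The weight set of a set of vectors. -/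
def wtSet {q n : ℕ} (w : ZMod q → ℕ) (C : Set (Fin n → ZMod q)) : Set ℕ :=
  {x | ∃ c ∈ C, c ≠ 0 ∧ wtVec w c = x}

section FWS

variable {q m : ℕ}

private lemma fws_w_le (w : ZMod q → ℕ)
    (hw0 : ∀ α : ZMod q, w α = 0 ↔ α = 0)
    (hwrange : {x | ∃ α : ZMod q, α ≠ 0 ∧ w α = x} = Set.Icc 1 m)
    (α : ZMod q) : w α ≤ m := by
  by_cases h : α = 0
  · simp [h, (hw0 0).2 rfl]
  · have : w α ∈ Set.Icc 1 m := by rw [← hwrange]; exact ⟨α, h, rfl⟩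
    exact this.2

private lemma fws_w_pos (w : ZMod q → ℕ)
    (hw0 : ∀ α : ZMod q, w α = 0 ↔ α = 0)
    {α : ZMod q} (h : α ≠ 0) : 1 ≤ w α :=
  Nat.one_le_iff_ne_zero.2 (fun h0 => h ((hw0 α).1 h0))

private lemma fws_exists_w (w : ZMod q → ℕ)
    (hwrange : {x | ∃ α : ZMod q, α ≠ 0 ∧ w α = x} = Set.Icc 1 m)
    {j : ℕ} (h1 : 1 ≤ j) (h2 : j ≤ m) : ∃ α : ZMod q, α ≠ 0 ∧ w α = j := by
  have : j ∈ Set.Icc 1 m := ⟨h1, h2⟩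
  rw [← hwrange] at this
  exact this

private lemma fws_wtVec_le {n : ℕ} (w : ZMod q → ℕ)
    (hw0 : ∀ α : ZMod q, w α = 0 ↔ α = 0)
    (hwrange : {x | ∃ α : ZMod q, α ≠ 0 ∧ w α = x} = Set.Icc 1 m)
    (c : Fin n → ZMod q) : wtVec w c ≤ n * m := by
  calc wtVec w c ≤ ∑ _i : Fin n, m :=
        Finset.sum_le_sum fun i _ => fws_w_le w hw0 hwrange (c i)
  _ = n * m := by simp [Finset.sum_const, mul_comm]

private lemma fws_wtVec_pos {n : ℕ} (w : ZMod q → ℕ)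
    (hw0 : ∀ α : ZMod q, w α = 0 ↔ α = 0)
    {c : Fin n → ZMod q} (hc : c ≠ 0) : 1 ≤ wtVec w c := by
  obtain ⟨i, hi⟩ : ∃ i, c i ≠ 0 := by
    by_contra h
    push_neg at h
    exact hc (funext fun i => h i)
  calc 1 ≤ w (c i) := fws_w_pos w hw0 hi
  _ ≤ wtVec w c :=
    Finset.single_le_sum (f := fun i => w (c i)) (fun j _ => Nat.zero_le _) (Finset.mem_univ i)

private lemma fws_wtSet_subset {n : ℕ} (w : ZMod q → ℕ)
    (hw0 : ∀ α : ZMod q, w α = 0 ↔ α = 0)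
    (hwrange : {x | ∃ α : ZMod q, α ≠ 0 ∧ w α = x} = Set.Icc 1 m)
    (C : Set (Fin n → ZMod q)) : wtSet w C ⊆ Set.Icc 1 (n * m) := by
  rintro x ⟨c, _, hc0, rfl⟩
  exact ⟨fws_wtVec_pos w hw0 hc0, fws_wtVec_le w hw0 hwrange c⟩

/-- Padding a vector on the left with zeros on the right, as a linear map. -/
private def padL (F : Type*) [Semiring F] (n' t : ℕ) :
    (Fin n' → F) →ₗ[F] (Fin (n' + t) → F) where
  toFun u := Fin.append u 0
  map_add' u v := by
    funext i
    cases i using Fin.addCases with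
    | left i => simp [Fin.append_left]
    | right i => simp [Fin.append_right]
  map_smul' c u := by
    funext i
    cases i using Fin.addCases with
    | left i => simp [Fin.append_left]
    | right i => simp [Fin.append_right]

private lemma padL_inj (F : Type*) [Semiring F] (n' t : ℕ) :
    Function.Injective (padL F n' t) := by
  intro u v h
  funext i
  have := congrFun h (Fin.castAdd t i)
  simpa [padL, Fin.append_left] using this

private lemma fws_wtVec_append {n' t : ℕ} (w : ZMod q → ℕ)
    (u : Fin n' → ZMod q) (v : Fin t → ZMod q) :
    wtVec w (Fin.append u v) = wtVec w u + wtVec w v := by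
  simp [wtVec, Fin.sum_univ_add, Fin.append_left, Fin.append_right]

private lemma fws_wtVec_const {t : ℕ} (w : ZMod q → ℕ) (γ : ZMod q) :
    wtVec w (fun _ : Fin t => γ) = t * w γ := by
  simp [wtVec, Finset.sum_const, mul_comm]

private lemma fws_geom (m : ℕ) : ∀ k : ℕ,
    m * (∑ i ∈ Finset.range k, (m + 1) ^ i) + 1 = (m + 1) ^ k := by
  intro k
  induction k with
  | zero => simp
  | succ k ih =>
    rw [Finset.sum_range_succ, pow_succ]
    ring_nf
    ring_nf at ih
    nlinarith [ih]

private lemma fws_S_ge (m : ℕ) (k : ℕ) : k ≤ ∑ i ∈ Finset.range k, (m + 1) ^ i := by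
  calc k = ∑ _i ∈ Finset.range k, 1 := by simp
  _ ≤ _ := Finset.sum_le_sum fun i _ => Nat.one_le_pow _ _ (Nat.succ_pos m)

/-- The inductive step: extend an FWS code by one dimension and `t` coordinates. -/
private lemma fws_step [Fact (Nat.Prime q)] (hm : 1 ≤ m)
    (w : ZMod q → ℕ) (hw0 : ∀ α : ZMod q, w α = 0 ↔ α = 0)
    (hwrange : {x | ∃ α : ZMod q, α ≠ 0 ∧ w α = x} = Set.Icc 1 m)
    (n n' t k : ℕ) (hnt : n' + t = n) (ht : 1 ≤ t) (htle : t ≤ n' * m + 1)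
    (C' : Submodule (ZMod q) (Fin n' → ZMod q))
    (hrk : Module.finrank (ZMod q) C' = k)
    (hwt : wtSet w (C' : Set (Fin n' → ZMod q)) = Set.Icc 1 (n' * m)) :
    ∃ C : Submodule (ZMod q) (Fin n → ZMod q),
      Module.finrank (ZMod q) C = k + 1 ∧
      wtSet w (C : Set (Fin n → ZMod q)) = Set.Icc 1 (n * m) := by
  subst hnt
  obtain ⟨β, hβ0, hβm⟩ := fws_exists_w w hwrange hm le_rfl
  set b : Fin (n' + t) → ZMod q := Fin.append 0 (fun _ : Fin t => β) with hb
  set i₀ : Fin (n' + t) := Fin.natAdd n' ⟨0, ht⟩ with hi₀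
  have hbi₀ : b i₀ = β := by
    show Fin.append (0 : Fin n' → ZMod q) (fun _ : Fin t => β) (Fin.natAdd n' ⟨0, ht⟩) = β
    rw [Fin.append_right]
  have hbne : b ≠ 0 := by
    intro h
    exact hβ0 (by rw [← hbi₀, h]; rfl)
  set P : Submodule (ZMod q) (Fin (n' + t) → ZMod q) := C'.map (padL (ZMod q) n' t) with hP
  have hPzero : ∀ p ∈ P, p i₀ = 0 := by
    rintro p ⟨u, _, rfl⟩
    show Fin.append u (0 : Fin t → ZMod q) (Fin.natAdd n' ⟨0, ht⟩) = 0
    rw [Fin.append_right]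
    rfl
  have hbP : b ∉ P := fun h => hβ0 (by rw [← hbi₀]; exact hPzero b h)
  set C : Submodule (ZMod q) (Fin (n' + t) → ZMod q) :=
    P ⊔ Submodule.span (ZMod q) {b} with hC
  refine ⟨C, ?_, ?_⟩
  · -- finrank
    have hinf : P ⊓ Submodule.span (ZMod q) {b} = ⊥ := by
      rw [eq_bot_iff]
      rintro z hz
      obtain ⟨hzP, hzb⟩ := Submodule.mem_inf.1 hz
      obtain ⟨c, rfl⟩ := Submodule.mem_span_singleton.1 hzb
      by_cases hc : c = 0
      · simp [hc]
      · exfalso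
        apply hbP
        have hmem : c⁻¹ • (c • b) ∈ P := P.smul_mem c⁻¹ hzP
        rwa [smul_smul, inv_mul_cancel₀ hc, one_smul] at hmem
    have hPrk : Module.finrank (ZMod q) P = k := by
      rw [← hrk]
      exact (LinearEquiv.finrank_eq
        (Submodule.equivMapOfInjective _ (padL_inj (ZMod q) n' t) C')).symm
    have hsrk : Module.finrank (ZMod q) (Submodule.span (ZMod q) {b}) = 1 :=
      finrank_span_singleton hbne
    have := Submodule.finrank_sup_add_finrank_inf_eq P (Submodule.span (ZMod q) {b})
    rw [hinf, hPrk, hsrk] at this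
    simpa using this
  · -- weight set
    apply Set.Subset.antisymm
    · exact fws_wtSet_subset w hw0 hwrange _
    · intro x hx
      obtain ⟨hx1, hx2⟩ := hx
      have key : ∀ (u : Fin n' → ZMod q) (c : ZMod q),
          padL (ZMod q) n' t u + c • b = Fin.append u (fun _ : Fin t => c * β) := by
        intro u c
        funext i
        cases i using Fin.addCases with
        | left i => simp [padL, hb, Fin.append_left]
        | right i => simp [padL, hb, Fin.append_right]
      by_cases hxs : x ≤ n' * m
      · obtain ⟨u, huC, hu0, huw⟩ : x ∈ wtSet w (C' : Set (Fin n' → ZMod q)) := by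
          rw [hwt]; exact ⟨hx1, hxs⟩
        refine ⟨padL (ZMod q) n' t u, ?_, ?_, ?_⟩
        · exact Submodule.mem_sup_left ⟨u, huC, rfl⟩
        · intro h
          exact hu0 (padL_inj (ZMod q) n' t (by rw [h, map_zero]))
        · have : padL (ZMod q) n' t u = Fin.append u (fun _ : Fin t => (0:ZMod q) * β) := by
            have := key u 0
            simpa using this
          rw [this, fws_wtVec_append, fws_wtVec_const]
          simp [(hw0 0).2 rfl, huw]
      · push_neg at hxs
        -- x > n' * m
        obtain ⟨d, hd, hd1⟩ : ∃ d, x = n' * m + d ∧ 1 ≤ d := ⟨x - n' * m, by omega, by omega⟩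
        have hx2' : n' * m + d ≤ n' * m + t * m := by
          have : (n' + t) * m = n' * m + t * m := by ring
          omega
        have hdtm : d ≤ t * m := by omega
        set a := d + t - 1 with ha
        set j := a / t with hj
        have htpos : 0 < t := ht
        have h1 : 1 ≤ j := (Nat.one_le_div_iff htpos).2 (by omega)
        have hjm : j ≤ m := by
          rw [hj, Nat.div_le_iff_le_mul_add_pred htpos]
          omega
        obtain ⟨J, hJ⟩ : ∃ J, j * t = J := ⟨_, rfl⟩
        have hmod := Nat.div_add_mod a t
        have hmlt : a % t < t := Nat.mod_lt _ htpos
        rw [← hj, mul_comm t j, hJ] at hmod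
        have hjd : d ≤ J := by omega
        have hjx : J ≤ x := by omega
        set y := x - J with hy
        have hyN : y ≤ n' * m := by omega
        have hxy : y + J = x := by omega
        obtain ⟨α, hα0, hαj⟩ := fws_exists_w w hwrange h1 hjm
        set c : ZMod q := α * β⁻¹ with hc
        have hcβ : c * β = α := by
          rw [hc, mul_assoc, inv_mul_cancel₀ hβ0, mul_one]
        have hc0 : c ≠ 0 := by
          intro h
          rw [h, zero_mul] at hcβ
          exact hα0 hcβ.symm
        have getu : ∃ u : Fin n' → ZMod q, u ∈ C' ∧ wtVec w u = y := by
          by_cases hy0 : y = 0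
          · exact ⟨0, C'.zero_mem, by simp [wtVec, (hw0 0).2 rfl, hy0]⟩
          · obtain ⟨u, huC, _, huw⟩ : y ∈ wtSet w (C' : Set (Fin n' → ZMod q)) := by
              rw [hwt]; exact ⟨by omega, hyN⟩
            exact ⟨u, huC, huw⟩
        obtain ⟨u, huC, huw⟩ := getu
        refine ⟨padL (ZMod q) n' t u + c • b, ?_, ?_, ?_⟩
        · exact Submodule.add_mem _ (Submodule.mem_sup_left ⟨u, huC, rfl⟩)
            (Submodule.mem_sup_right
              (Submodule.smul_mem _ c (Submodule.mem_span_singleton_self b)))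
        · intro h
          have h0 : (padL (ZMod q) n' t u + c • b) i₀ = 0 := by rw [h]; rfl
          rw [key u c] at h0
          have : ((Fin.append u (fun _ : Fin t => c * β)) i₀ : ZMod q) = c * β := by
            show Fin.append u (fun _ : Fin t => c * β) (Fin.natAdd n' ⟨0, ht⟩) = c * β
            rw [Fin.append_right]
          rw [this, hcβ] at h0
          exact hα0 h0
        · rw [key u c, fws_wtVec_append, fws_wtVec_const, hcβ, hαj, huw, mul_comm t j, hJ,
            hxy]

private lemma fws_main [Fact (Nat.Prime q)] (hm : 1 ≤ m)
    (w : ZMod q → ℕ) (hw0 : ∀ α : ZMod q, w α = 0 ↔ α = 0)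
    (hwrange : {x | ∃ α : ZMod q, α ≠ 0 ∧ w α = x} = Set.Icc 1 m) :
    ∀ k, 1 ≤ k → ∀ n, k ≤ n → n ≤ ∑ i ∈ Finset.range k, (m + 1) ^ i →
    ∃ C : Submodule (ZMod q) (Fin n → ZMod q),
      Module.finrank (ZMod q) C = k ∧
      wtSet w (C : Set (Fin n → ZMod q)) = Set.Icc 1 (n * m) := by
  intro k hk
  induction k, hk using Nat.le_induction with
  | base =>
    intro n hn1 hn2
    have hSn : (∑ i ∈ Finset.range 1, (m + 1) ^ i) = 1 := by simp
    have hn : n = 1 := by omega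
    subst hn
    refine ⟨⊤, ?_, ?_⟩
    · rw [finrank_top, Module.finrank_fin_fun]
    · ext x
      simp only [wtSet, Set.mem_setOf_eq, Submodule.mem_top, SetLike.mem_coe]
      constructor
      · rintro ⟨c, _, hc0, rfl⟩
        have hc00 : c 0 ≠ 0 := by
          intro h
          exact hc0 (funext fun i => by rw [Subsingleton.elim i 0]; exact h)
        have : wtVec w c = w (c 0) := by simp [wtVec]
        rw [this, one_mul]
        rw [← hwrange]
        exact ⟨c 0, hc00, rfl⟩
      · intro hx
        rw [one_mul, ← hwrange] at hx
        obtain ⟨α, hα0, hαx⟩ := hx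
        refine ⟨fun _ => α, trivial, ?_, ?_⟩
        · intro h
          exact hα0 (congrFun h 0)
        · simp [wtVec, hαx]
  | succ k hk ih =>
    intro n hn1 hn2
    rw [Finset.sum_range_succ] at hn2
    set Sk := ∑ i ∈ Finset.range k, (m + 1) ^ i with hSk
    have hSge : k ≤ Sk := fws_S_ge m k
    have hgeom : m * Sk + 1 = (m + 1) ^ k := fws_geom m k
    by_cases hc : n - 1 ≤ Sk
    · -- n' = n - 1, t = 1
      obtain ⟨C', hC'rk, hC'wt⟩ := ih (n - 1) (by omega) hc
      exact fws_step hm w hw0 hwrange n (n - 1) 1 k (by omega) le_rfl (by omega) C' hC'rk hC'wt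
    · -- n' = Sk, t = n - Sk
      obtain ⟨C', hC'rk, hC'wt⟩ := ih Sk hSge le_rfl
      refine fws_step hm w hw0 hwrange n Sk (n - Sk) k (by omega) (by omega) ?_ C' hC'rk hC'wt
      have : n - Sk ≤ (m + 1) ^ k := by omega
      have h2 : (m + 1) ^ k = Sk * m + 1 := by rw [← hgeom]; ring
      omega

end FWS

theorem stmt2 (q m k n : ℕ) (hq : q.Prime) (hm : 1 ≤ m) (hk : 1 ≤ k)
    (w : ZMod q → ℕ) (hw0 : ∀ α : ZMod q, w α = 0 ↔ α = 0)
    (hwrange : {x | ∃ α : ZMod q, α ≠ 0 ∧ w α = x} = Set.Icc 1 m)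
    (hkn : k ≤ n) (hn : n ≤ ∑ i ∈ Finset.range k, (m + 1) ^ i) :
    ∃ C : Submodule (ZMod q) (Fin n → ZMod q),
      Module.finrank (ZMod q) C = k ∧
      wtSet w (C : Set (Fin n → ZMod q)) = Set.Icc 1 (n * m) := by
  haveI : Fact (Nat.Prime q) := ⟨hq⟩
  exact fws_main hm w hw0 hwrange k hk n hkn hn
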